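/- Let n ≥ 1, let ℳ : ℝ^{2n} → ℝ^{2n} be a twice continuously differentiable symplectic map (its Jacobian M(x) satisfies M(x)ᵀ J_{2n} M(x) = J_{2n} at every point x), and let α = (α₁, α₂)ᵀ : ℝ^{4n} → ℝ^{4n} be a continuously differentiable conformal symplectic map, whose Jacobian is written in 2n×2n blocks as [[A, B], [C, D]]. Let z ∈ ℝ^{2n} be a point such that det( C(ℳ(z), z) · M(z) + D(ℳ(z), z) ) ≠ 0, where M(z) is the Jacobian of ℳ at z. Then there is an open neighborhood U of z such that the map g := α₂ ∘ (ℳ, Id), i.e., g(x) = α₂(ℳ(x), x), is a C¹ diffeomorphism from U onto its image g(U), and there exists a continuously differentiable function F : g(U) → ℝ whose gradient satisfies (∇F)ᵀ = (α₁ ∘ (ℳ, Id)) ∘ (α₂ ∘ (ℳ, Id))⁻¹ on g(U). -/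

import Mathlib

open Matrix
open Matrix Set Metric intervalIntegral


section aux
variable {ι κ : Type*} [Fintype ι] [DecidableEq ι] [Fintype κ] [DecidableEq κ]
set_option linter.unusedSectionVars false

lemma pi_sum_single (v : ι → ℝ) : ∑ i, v i • (Pi.single i 1 : ι → ℝ) = v := by
  ext j
  simp [Finset.sum_apply, Pi.single_apply]

lemma clm_apply_eq_sum {F : Type*} [NormedAddCommGroup F] [NormedSpace ℝ F]
    (L : (ι → ℝ) →L[ℝ] F) (v : ι → ℝ) :
    L v = ∑ i, v i • L (Pi.single i 1) := by
  conv_lhs => rw [← pi_sum_single v]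
  rw [map_sum]
  simp

lemma differentiableAt_component {φ : (ι → ℝ) → (κ → ℝ)} {x : ι → ℝ}
    (hφ : DifferentiableAt ℝ φ x) (k : κ) :
    DifferentiableAt ℝ (fun x => φ x k) x :=
  ((ContinuousLinearMap.proj (R := ℝ) (φ := fun _ : κ => ℝ) k).differentiableAt).comp x hφ

lemma fderiv_component_eq {φ : (ι → ℝ) → (κ → ℝ)} {x : ι → ℝ}
    (hφ : DifferentiableAt ℝ φ x) (k : κ) :
    fderiv ℝ (fun x => φ x k) x =
      (ContinuousLinearMap.proj (R := ℝ) (φ := fun _ : κ => ℝ) k).comp (fderiv ℝ φ x) := by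
  have := ((ContinuousLinearMap.proj (R := ℝ) (φ := fun _ : κ => ℝ) k).hasFDerivAt
    (x := φ x)).comp x hφ.hasFDerivAt
  exact this.fderiv

lemma fderiv_component {φ : (ι → ℝ) → (κ → ℝ)} {x : ι → ℝ}
    (hφ : DifferentiableAt ℝ φ x) (k : κ) (v : ι → ℝ) :
    fderiv ℝ (fun x => φ x k) x v = fderiv ℝ φ x v k := by
  rw [fderiv_component_eq hφ k]; rfl

lemma chain_entry {ψ : (κ → ℝ) → ℝ} {φ : (ι → ℝ) → (κ → ℝ)} {x : ι → ℝ}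
    (hψ : DifferentiableAt ℝ ψ (φ x)) (hφ : DifferentiableAt ℝ φ x) (v : ι → ℝ) :
    fderiv ℝ (fun x => ψ (φ x)) x v
      = ∑ k, fderiv ℝ (fun w => φ w k) x v * fderiv ℝ ψ (φ x) (Pi.single k 1) := by
  have h : fderiv ℝ (fun x => ψ (φ x)) x = (fderiv ℝ ψ (φ x)).comp (fderiv ℝ φ x) :=
    (hψ.hasFDerivAt.comp x hφ.hasFDerivAt).fderiv
  rw [h, ContinuousLinearMap.comp_apply, clm_apply_eq_sum (fderiv ℝ ψ (φ x)) (fderiv ℝ φ x v)]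
  refine Finset.sum_congr rfl fun k _ => ?_
  rw [smul_eq_mul, fderiv_component hφ k v]

lemma norm_proj_le_one (i : ι) :
    ‖(ContinuousLinearMap.proj (R := ℝ) (φ := fun _ : ι => ℝ) i)‖ ≤ 1 :=
  ContinuousLinearMap.opNorm_le_bound _ zero_le_one fun v => by
    simpa using norm_le_pi_norm v i

end aux

section poincare

section alg
variable {m : Type*} [Fintype m] [DecidableEq m]

lemma sym_of_blocks (J A B C D M : Matrix m m ℝ) (μ : ℝ)
    (h1 : Aᵀ * C - Cᵀ * A = μ • J)
    (h2 : Aᵀ * D - Cᵀ * B = 0)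
    (h4 : Bᵀ * D - Dᵀ * B = -(μ • J))
    (hM : Mᵀ * J * M = J) :
    ((C * M + D)ᵀ * (A * M + B))ᵀ = (C * M + D)ᵀ * (A * M + B) := by
  have e1 : Aᵀ * C = Cᵀ * A + μ • J := by rw [← h1]; abel
  have e2 : Aᵀ * D = Cᵀ * B := by rwa [sub_eq_zero] at h2
  have e3 : Dᵀ * A = Bᵀ * C := by
    have := congrArg Matrix.transpose h2
    simp only [transpose_sub, transpose_mul, transpose_transpose, transpose_zero] at this
    rwa [sub_eq_zero] at this
  have e4 : Bᵀ * D = Dᵀ * B - μ • J := by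
    have := h4; rw [sub_eq_iff_eq_add] at this; rw [this]; abel
  have hM' : Mᵀ * (J * M) = J := by rw [← Matrix.mul_assoc]; exact hM
  have f1 : Mᵀ * Aᵀ * (C * M) = Mᵀ * Cᵀ * (A * M) + μ • J := by
    calc Mᵀ * Aᵀ * (C * M) = Mᵀ * (Aᵀ * C * M) := by
          rw [Matrix.mul_assoc, Matrix.mul_assoc]
      _ = Mᵀ * ((Cᵀ * A + μ • J) * M) := by rw [e1]
      _ = Mᵀ * Cᵀ * (A * M) + μ • (Mᵀ * (J * M)) := by
          rw [Matrix.add_mul, Matrix.mul_add, Matrix.smul_mul, Matrix.mul_smul]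
          rw [Matrix.mul_assoc, Matrix.mul_assoc]
      _ = Mᵀ * Cᵀ * (A * M) + μ • J := by rw [hM']
  have f2 : Mᵀ * Aᵀ * D = Mᵀ * Cᵀ * B := by
    rw [Matrix.mul_assoc, Matrix.mul_assoc, e2]
  have f3 : Bᵀ * (C * M) = Dᵀ * (A * M) := by
    rw [← Matrix.mul_assoc, ← Matrix.mul_assoc, e3]
  calc ((C * M + D)ᵀ * (A * M + B))ᵀ
      = (Mᵀ * Aᵀ * (C * M) + Mᵀ * Aᵀ * D) + (Bᵀ * (C * M) + Bᵀ * D) := by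
        simp only [transpose_add, transpose_mul, transpose_transpose, Matrix.add_mul,
          Matrix.mul_add, Matrix.mul_assoc]
    _ = ((Mᵀ * Cᵀ * (A * M) + μ • J) + Mᵀ * Cᵀ * B) + (Dᵀ * (A * M) + (Dᵀ * B - μ • J)) := by
        rw [f1, f2, f3, e4]
    _ = (Mᵀ * Cᵀ * (A * M) + Mᵀ * Cᵀ * B) + (Dᵀ * (A * M) + Dᵀ * B) := by
        simp only [Matrix.mul_assoc]; abel
    _ = (C * M + D)ᵀ * (A * M + B) := by
        simp only [transpose_add, transpose_mul, Matrix.add_mul, Matrix.mul_add,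
          Matrix.mul_assoc]; abel

lemma clm_equiv_of_det (L : ((m → ℝ)) →L[ℝ] (m → ℝ))
    (h : (Matrix.of fun i j => L (Pi.single j 1) i).det ≠ 0) :
    ∃ Φ : (m → ℝ) ≃L[ℝ] (m → ℝ), (Φ : (m → ℝ) →L[ℝ] (m → ℝ)) = L := by
  have hmat : LinearMap.toMatrix' (L : (m → ℝ) →ₗ[ℝ] (m → ℝ))
      = Matrix.of fun i j => L (Pi.single j 1) i := by
    refine Matrix.ext fun i j => ?_
    rw [LinearMap.toMatrix'_apply]
    have hs : (fun j' => if j' = j then (1:ℝ) else 0) = Pi.single j 1 := by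
      funext j'; simp [Pi.single_apply]
    rfl
  have hunit : IsUnit (LinearMap.toMatrix (Pi.basisFun ℝ m) (Pi.basisFun ℝ m)
      (L : (m → ℝ) →ₗ[ℝ] (m → ℝ))).det := by
    rw [LinearMap.toMatrix_eq_toMatrix', hmat]
    exact isUnit_iff_ne_zero.2 h
  let e : (m → ℝ) ≃ₗ[ℝ] (m → ℝ) := LinearEquiv.ofIsUnitDet hunit
  have he : (e : (m → ℝ) →ₗ[ℝ] (m → ℝ)) = (L : (m → ℝ) →ₗ[ℝ] (m → ℝ)) :=
    LinearEquiv.coe_ofIsUnitDet hunit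
  refine ⟨e.toContinuousLinearEquiv, ?_⟩
  refine ContinuousLinearMap.ext fun v => ?_
  have h1 : (e.toContinuousLinearEquiv : (m → ℝ) → (m → ℝ)) = e :=
    LinearEquiv.coe_toContinuousLinearEquiv' e
  have h2 : ((e.toContinuousLinearEquiv : (m → ℝ) →L[ℝ] (m → ℝ)) : (m → ℝ) → (m → ℝ)) v = e v :=
    congrFun h1 v
  rw [h2]
  exact congrFun (congrArg (fun (f : (m → ℝ) →ₗ[ℝ] (m → ℝ)) => (f : (m → ℝ) → (m → ℝ))) he) v

end alg


section chainElim
variable {ι κ : Type*} [Fintype ι] [DecidableEq ι] [Fintype κ] [DecidableEq κ]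
set_option linter.unusedSectionVars false


lemma differentiableAt_elim {M : (ι → ℝ) → (κ → ℝ)} {x : ι → ℝ}
    (hM : DifferentiableAt ℝ M x) :
    DifferentiableAt ℝ (fun x => Sum.elim (M x) x : (ι → ℝ) → (κ ⊕ ι) → ℝ) x := by
  rw [differentiableAt_pi]
  intro k
  cases k with
  | inl k => exact differentiableAt_component hM k
  | inr k => exact differentiableAt_component differentiableAt_id k

lemma chain_entry_elim {ψ : ((κ ⊕ ι) → ℝ) → ℝ} {M : (ι → ℝ) → (κ → ℝ)} {x : ι → ℝ}
    (hψ : DifferentiableAt ℝ ψ (Sum.elim (M x) x))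
    (hM : DifferentiableAt ℝ M x) (j : ι) :
    fderiv ℝ (fun x => ψ (Sum.elim (M x) x)) x (Pi.single j 1)
      = (∑ k, fderiv ℝ (fun y => M y k) x (Pi.single j 1)
          * fderiv ℝ ψ (Sum.elim (M x) x) (Pi.single (Sum.inl k) 1))
        + fderiv ℝ ψ (Sum.elim (M x) x) (Pi.single (Sum.inr j) 1) := by
  have hφ : DifferentiableAt ℝ (fun x => Sum.elim (M x) x : (ι → ℝ) → (κ ⊕ ι) → ℝ) x :=
    differentiableAt_elim hM
  rw [chain_entry (ψ := ψ) (φ := fun x => (Sum.elim (M x) x : (κ ⊕ ι) → ℝ)) hψ hφ (Pi.single j 1), Fintype.sum_sum_type]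
  show (∑ k : κ, fderiv ℝ (fun x' => Sum.elim (M x') x' (Sum.inl k)) x (Pi.single j 1)
      * fderiv ℝ ψ (Sum.elim (M x) x) (Pi.single (Sum.inl k) 1))
    + (∑ k : ι, fderiv ℝ (fun x' => Sum.elim (M x') x' (Sum.inr k)) x (Pi.single j 1)
      * fderiv ℝ ψ (Sum.elim (M x) x) (Pi.single (Sum.inr k) 1)) = _
  refine congrArg₂ (· + ·) (Finset.sum_congr rfl fun k _ => rfl) ?_
  · have h2 : ∀ k : ι, fderiv ℝ (fun x' : ι → ℝ => Sum.elim (M x') x' (Sum.inr k)) x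
        = ContinuousLinearMap.proj (R := ℝ) (φ := fun _ : ι => ℝ) k := fun k =>
      (ContinuousLinearMap.proj (R := ℝ) (φ := fun _ : ι => ℝ) k).fderiv
    calc ∑ k : ι, fderiv ℝ (fun x' => Sum.elim (M x') x' (Sum.inr k)) x (Pi.single j 1)
          * fderiv ℝ ψ (Sum.elim (M x) x) (Pi.single (Sum.inr k) 1)
        = ∑ k, (Pi.single j (1:ℝ) : ι → ℝ) k
            * fderiv ℝ ψ (Sum.elim (M x) x) (Pi.single (Sum.inr k) 1) :=
          Finset.sum_congr rfl fun k _ => by rw [h2 k]; rfl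
      _ = fderiv ℝ ψ (Sum.elim (M x) x) (Pi.single (Sum.inr j) 1) := by
          simp [Pi.single_apply]



end chainElim


section poincare
variable {ι : Type*} [Fintype ι] [DecidableEq ι]

lemma poincare {V : Set (ι → ℝ)} (hV : IsOpen V) {f : (ι → ℝ) → (ι → ℝ)}
    (hf : ContDiffOn ℝ 1 f V)
    (hsym : ∀ y ∈ V, ∀ i j, fderiv ℝ (fun w => f w i) y (Pi.single j 1)
      = fderiv ℝ (fun w => f w j) y (Pi.single i 1))
    {c : ι → ℝ} {r : ℝ} (hball : Metric.ball c r ⊆ V) :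
    ∃ F : (ι → ℝ) → ℝ, ∀ y ∈ Metric.ball c r,
      HasFDerivAt F
        (∑ i, f y i • ContinuousLinearMap.proj (R := ℝ) (φ := fun _ : ι => ℝ) i) y := by
  classical
  set γ : (ι → ℝ) → ℝ → (ι → ℝ) := fun y t => c + t • (y - c) with hγdef
  have hdiff : ∀ y ∈ Metric.ball c r, DifferentiableAt ℝ f y := fun y hy =>
    (hf.contDiffAt (hV.mem_nhds (hball hy))).differentiableAt one_ne_zero
  have hcont : ContinuousOn f V := hf.continuousOn
  have hcontD : ContinuousOn (fderiv ℝ f) V := hf.continuousOn_fderiv_of_isOpen hV le_rfl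
  have hcontDi : ∀ i, ContinuousOn (fun y => fderiv ℝ (fun w => f w i) y) (Metric.ball c r) := by
    intro i
    have h1 : ContinuousOn (fun y => (ContinuousLinearMap.proj (R := ℝ)
        (φ := fun _ : ι => ℝ) i).comp (fderiv ℝ f y)) (Metric.ball c r) := by
      exact ((ContinuousLinearMap.compL ℝ (ι → ℝ) (ι → ℝ) ℝ
        (ContinuousLinearMap.proj i)).continuous).comp_continuousOn (hcontD.mono hball)
    exact h1.congr fun y hy => fderiv_component_eq (hdiff y hy) i
  have hγcont : ∀ y, Continuous (fun t => γ y t) := by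
    intro y
    exact continuous_const.add (continuous_id.smul continuous_const)
  -- the potential function
  refine ⟨fun y => ∫ t in (0:ℝ)..1, ∑ i, f (γ y t) i * (y i - c i), ?_⟩
  intro y₀ hy₀
  have hy0 : ‖y₀ - c‖ < r := by rwa [mem_ball_iff_norm] at hy₀
  have hr : 0 < r := lt_of_le_of_lt (norm_nonneg _) hy0
  set ρ : ℝ := (‖y₀ - c‖ + r) / 2 with hρdef
  have hρ1 : ‖y₀ - c‖ < ρ := by rw [hρdef]; linarith
  have hρ2 : ρ < r := by rw [hρdef]; linarith
  have hρ0 : 0 ≤ ρ := le_trans (norm_nonneg _) hρ1.le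
  set ε : ℝ := ρ - ‖y₀ - c‖ with hεdef
  have hε : 0 < ε := by rw [hεdef]; linarith
  have hmem : ∀ y ∈ Metric.ball y₀ ε, ∀ t ∈ Set.Icc (0:ℝ) 1,
      γ y t ∈ Metric.closedBall c ρ := by
    intro y hy t ht
    have h1 : γ y t - c = t • (y - c) := by
      show c + t • (y - c) - c = t • (y - c)
      rw [add_sub_cancel_left]
    have h2 : ‖y - c‖ ≤ ‖y - y₀‖ + ‖y₀ - c‖ := norm_sub_le_norm_sub_add_norm_sub y y₀ c
    have h3 : ‖y - y₀‖ < ε := by rwa [mem_ball_iff_norm] at hy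
    rw [Metric.mem_closedBall, dist_eq_norm, h1, norm_smul]
    have h4 : |t| ≤ 1 := by rw [abs_le]; constructor <;> [linarith [ht.1]; linarith [ht.2]]
    calc |t| * ‖y - c‖ ≤ 1 * ‖y - c‖ := by
          exact mul_le_mul_of_nonneg_right h4 (norm_nonneg _)
      _ = ‖y - c‖ := one_mul _
      _ ≤ ρ := by rw [hεdef] at h3; linarith
  have hKsub : Metric.closedBall c ρ ⊆ Metric.ball c r := closedBall_subset_ball hρ2
  have hKV : Metric.closedBall c ρ ⊆ V := hKsub.trans hball
  have hK : IsCompact (Metric.closedBall c ρ) := isCompact_closedBall c ρ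
  obtain ⟨C₀, hC₀⟩ := hK.exists_bound_of_continuousOn (hcont.mono hKV)
  obtain ⟨C₁, hC₁⟩ := hK.exists_bound_of_continuousOn (hcontD.mono hKV)
  have hC₀0 : 0 ≤ C₀ := le_trans (norm_nonneg _) (hC₀ c (mem_closedBall_self hρ0))
  have hC₁0 : 0 ≤ C₁ := le_trans (norm_nonneg _) (hC₁ c (mem_closedBall_self hρ0))
  have hIsub : Set.uIoc (0:ℝ) 1 ⊆ Set.Icc (0:ℝ) 1 := by
    rw [Set.uIoc_of_le zero_le_one]; exact Set.Ioc_subset_Icc_self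
  have hIcc : Set.uIcc (0:ℝ) 1 = Set.Icc 0 1 := Set.uIcc_of_le zero_le_one
  -- the derivative of the integrand w.r.t. y
  set F' : (ι → ℝ) → ℝ → ((ι → ℝ) →L[ℝ] ℝ) := fun y t =>
    ∑ i, (f (γ y t) i • ContinuousLinearMap.proj (R := ℝ) (φ := fun _ : ι => ℝ) i
      + (y i - c i) • (t • fderiv ℝ (fun w => f w i) (γ y t))) with hF'def
  -- component bounds
  have hfdiffi : ∀ w ∈ Metric.ball c r, ∀ i, DifferentiableAt ℝ (fun x => f x i) w :=
    fun w hw i => differentiableAt_component (hdiff w hw) i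
  have hDi_le : ∀ w ∈ Metric.closedBall c ρ, ∀ i,
      ‖fderiv ℝ (fun x => f x i) w‖ ≤ C₁ := by
    intro w hw i
    rw [fderiv_component_eq (hdiff w (hKsub hw)) i]
    calc ‖(ContinuousLinearMap.proj (R := ℝ) (φ := fun _ : ι => ℝ) i).comp (fderiv ℝ f w)‖
        ≤ ‖(ContinuousLinearMap.proj (R := ℝ) (φ := fun _ : ι => ℝ) i)‖ * ‖fderiv ℝ f w‖ :=
          ContinuousLinearMap.opNorm_comp_le _ _
      _ ≤ 1 * C₁ := by
          exact mul_le_mul (norm_proj_le_one i) (hC₁ w hw) (norm_nonneg _) zero_le_one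
      _ = C₁ := one_mul _
  have hfi_le : ∀ w ∈ Metric.closedBall c ρ, ∀ i, |f w i| ≤ C₀ := by
    intro w hw i
    calc |f w i| ≤ ‖f w‖ := norm_le_pi_norm (f w) i
      _ ≤ C₀ := hC₀ w hw
  -- continuity of the integrand in t
  have hFcont : ∀ y ∈ Metric.ball y₀ ε,
      ContinuousOn (fun t => ∑ i, f (γ y t) i * (y i - c i)) (Set.Icc (0:ℝ) 1) := by
    intro y hy
    apply continuousOn_finset_sum
    intro i _
    have h1 : ContinuousOn (fun t => f (γ y t) i) (Set.Icc (0:ℝ) 1) := by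
      have h2 : ContinuousOn (fun w => f w i) V :=
        (continuous_apply i).comp_continuousOn hcont
      exact h2.comp (hγcont y).continuousOn fun t ht => hKV (hmem y hy t ht)
    exact h1.mul continuousOn_const
  have hF'cont : ContinuousOn (F' y₀) (Set.Icc (0:ℝ) 1) := by
    apply continuousOn_finset_sum
    intro i _
    have hy₀ε : y₀ ∈ Metric.ball y₀ ε := mem_ball_self hε
    have h1 : ContinuousOn (fun t => f (γ y₀ t) i) (Set.Icc (0:ℝ) 1) :=
      ((continuous_apply i).comp_continuousOn hcont).comp (hγcont y₀).continuousOn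
        fun t ht => hKV (hmem y₀ hy₀ε t ht)
    have h2 : ContinuousOn (fun t => fderiv ℝ (fun w => f w i) (γ y₀ t)) (Set.Icc (0:ℝ) 1) :=
      (hcontDi i).comp (hγcont y₀).continuousOn
        fun t ht => hKsub (hmem y₀ hy₀ε t ht)
    exact (h1.smul continuousOn_const).add
      (ContinuousOn.smul (f := fun _ => y₀ i - c i) continuousOn_const
        (ContinuousOn.smul (f := fun t => t) continuousOn_id h2))
  -- differentiation under the integral sign
  have key : HasFDerivAt (fun y => ∫ t in (0:ℝ)..1, ∑ i, f (γ y t) i * (y i - c i))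
      (∫ t in (0:ℝ)..1, F' y₀ t) y₀ := by
    apply intervalIntegral.hasFDerivAt_integral_of_dominated_of_fderiv_le
      (bound := fun _ => (Fintype.card ι : ℝ) * (C₀ * 1 + ρ * (1 * C₁))) (Metric.ball_mem_nhds y₀ hε)
    · filter_upwards [Metric.ball_mem_nhds y₀ hε] with y hy
      exact ((hFcont y hy).mono hIsub).aestronglyMeasurable measurableSet_uIoc
    · exact ((hFcont y₀ (mem_ball_self hε)).mono (by rw [hIcc])).intervalIntegrable
    · exact (hF'cont.mono hIsub).aestronglyMeasurable measurableSet_uIoc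
    · apply MeasureTheory.ae_of_all
      intro t ht y hy
      have htI : t ∈ Set.Icc (0:ℝ) 1 := hIsub ht
      have hmemy : γ y t ∈ Metric.closedBall c ρ := hmem y hy t htI
      have h4 : |t| ≤ 1 := by
        rw [abs_le]; exact ⟨by linarith [htI.1], htI.2⟩
      have hyc : ∀ i, |y i - c i| ≤ ρ := by
        intro i
        have h5 : |(y - c) i| ≤ ‖y - c‖ := norm_le_pi_norm (y - c) i
        have h6 : ‖y - c‖ ≤ ρ := by
          have h2 : ‖y - c‖ ≤ ‖y - y₀‖ + ‖y₀ - c‖ := norm_sub_le_norm_sub_add_norm_sub y y₀ c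
          have h3 : ‖y - y₀‖ < ε := by rwa [mem_ball_iff_norm] at hy
          rw [hεdef] at h3; linarith
        simpa using h5.trans h6
      calc ‖F' y t‖ ≤ ∑ i : ι, (C₀ * 1 + ρ * (1 * C₁)) := by
            rw [hF'def]
            refine (norm_sum_le _ _).trans (Finset.sum_le_sum fun i _ => ?_)
            refine (norm_add_le _ _).trans (add_le_add ?_ ?_)
            · rw [norm_smul (f (γ y t) i)
                (ContinuousLinearMap.proj (R := ℝ) (φ := fun _ : ι => ℝ) i)]
              refine mul_le_mul ?_ (norm_proj_le_one i) (norm_nonneg _) hC₀0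
              rw [Real.norm_eq_abs]
              exact hfi_le _ hmemy i
            · rw [norm_smul (y i - c i) (t • fderiv ℝ (fun w => f w i) (γ y t)),
                norm_smul t (fderiv ℝ (fun w => f w i) (γ y t))]
              refine mul_le_mul ?_ (mul_le_mul ?_ (hDi_le _ hmemy i) (norm_nonneg _)
                zero_le_one) (by positivity) hρ0
              · rw [Real.norm_eq_abs]; exact hyc i
              · rw [Real.norm_eq_abs]; exact h4
        _ = (Fintype.card ι : ℝ) * (C₀ * 1 + ρ * (1 * C₁)) := by
            rw [Finset.sum_const, nsmul_eq_mul]; rfl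
    · exact intervalIntegrable_const
    · apply MeasureTheory.ae_of_all
      intro t ht y hy
      have htI : t ∈ Set.Icc (0:ℝ) 1 := hIsub ht
      have hmemy : γ y t ∈ Metric.ball c r := hKsub (hmem y hy t htI)
      rw [hF'def]
      apply HasFDerivAt.fun_sum
      intro i _
      have hγd : HasFDerivAt (fun y => γ y t)
          (t • ContinuousLinearMap.id ℝ (ι → ℝ)) y := by
        have h1 : HasFDerivAt (fun y : ι → ℝ => y - c)
            (ContinuousLinearMap.id ℝ (ι → ℝ)) y := (hasFDerivAt_id y).sub_const c
        exact (h1.const_smul t).const_add c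
      have hfd : HasFDerivAt (fun w => f w i)
          (fderiv ℝ (fun w => f w i) (γ y t)) (γ y t) :=
        (hfdiffi _ hmemy i).hasFDerivAt
      have hcomp : HasFDerivAt (fun y => f (γ y t) i)
          (t • fderiv ℝ (fun w => f w i) (γ y t)) y := by
        have h2 := hfd.comp y hγd
        have h3 : (fderiv ℝ (fun w => f w i) (γ y t)).comp
            (t • ContinuousLinearMap.id ℝ (ι → ℝ))
            = t • fderiv ℝ (fun w => f w i) (γ y t) := by
          ext v; simp
        rwa [h3] at h2
      have hsub2 : HasFDerivAt (fun y : ι → ℝ => y i - c i)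
          (ContinuousLinearMap.proj (R := ℝ) (φ := fun _ : ι => ℝ) i) y := by
        have h5 : HasFDerivAt (fun y : ι → ℝ => y i)
            (ContinuousLinearMap.proj (R := ℝ) (φ := fun _ : ι => ℝ) i) y :=
          (ContinuousLinearMap.proj (R := ℝ) (φ := fun _ : ι => ℝ) i).hasFDerivAt
        simpa using h5.sub_const (c i)
      exact hcomp.mul hsub2
  -- identify the derivative
  have hF'int : IntervalIntegrable (F' y₀) MeasureTheory.volume 0 1 :=
    (hF'cont.mono (by rw [hIcc])).intervalIntegrable
  have hint_eq : (∫ t in (0:ℝ)..1, F' y₀ t)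
      = ∑ i, f y₀ i • ContinuousLinearMap.proj (R := ℝ) (φ := fun _ : ι => ℝ) i := by
    refine ContinuousLinearMap.ext fun v => ?_
    rw [ContinuousLinearMap.intervalIntegral_apply hF'int v]
    have hy₀ε : y₀ ∈ Metric.ball y₀ ε := mem_ball_self hε
    have hγV : ∀ t ∈ Set.Icc (0:ℝ) 1, γ y₀ t ∈ Metric.ball c r :=
      fun t ht => hKsub (hmem y₀ hy₀ε t ht)
    -- step A : pointwise identification of the integrand
    have stepA : ∀ t ∈ Set.Icc (0:ℝ) 1, F' y₀ t v
        = ∑ j, v j * (f (γ y₀ t) j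
          + t * (fderiv ℝ (fun x => f x j) (γ y₀ t) (y₀ - c))) := by
      intro t ht
      have hγmem : γ y₀ t ∈ V := hball (hγV t ht)
      rw [hF'def]
      simp only [ContinuousLinearMap.sum_apply, ContinuousLinearMap.add_apply,
        ContinuousLinearMap.smul_apply, ContinuousLinearMap.proj_apply, smul_eq_mul]
      rw [Finset.sum_add_distrib]
      have hpart2 : ∑ i, (y₀ i - c i) * (t * (fderiv ℝ (fun x => f x i) (γ y₀ t) v))
          = ∑ j, v j * (t * (fderiv ℝ (fun x => f x j) (γ y₀ t) (y₀ - c))) := by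
        calc ∑ i, (y₀ i - c i) * (t * (fderiv ℝ (fun x => f x i) (γ y₀ t) v))
            = ∑ i, ∑ j, (y₀ i - c i) * (t * (v j
                * fderiv ℝ (fun x => f x i) (γ y₀ t) (Pi.single j 1))) := by
              refine Finset.sum_congr rfl fun i _ => ?_
              rw [clm_apply_eq_sum (fderiv ℝ (fun x => f x i) (γ y₀ t)) v,
                Finset.mul_sum, Finset.mul_sum]
              refine Finset.sum_congr rfl fun j _ => ?_
              rw [smul_eq_mul]
          _ = ∑ j, ∑ i, (y₀ i - c i) * (t * (v j
                * fderiv ℝ (fun x => f x i) (γ y₀ t) (Pi.single j 1))) := Finset.sum_comm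
          _ = ∑ j, ∑ i, (y₀ i - c i) * (t * (v j
                * fderiv ℝ (fun x => f x j) (γ y₀ t) (Pi.single i 1))) := by
              refine Finset.sum_congr rfl fun j _ => Finset.sum_congr rfl fun i _ => ?_
              rw [hsym _ hγmem i j]
          _ = ∑ j, v j * (t * ∑ i, (y₀ - c) i
                * fderiv ℝ (fun x => f x j) (γ y₀ t) (Pi.single i 1)) := by
              refine Finset.sum_congr rfl fun j _ => ?_
              rw [Finset.mul_sum, Finset.mul_sum]
              refine Finset.sum_congr rfl fun i _ => ?_
              have : (y₀ - c) i = y₀ i - c i := rfl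
              rw [this]; ring
          _ = ∑ j, v j * (t * (fderiv ℝ (fun x => f x j) (γ y₀ t) (y₀ - c))) := by
              refine Finset.sum_congr rfl fun j _ => ?_
              rw [clm_apply_eq_sum (fderiv ℝ (fun x => f x j) (γ y₀ t)) (y₀ - c)]
              simp only [smul_eq_mul]
      rw [hpart2]
      rw [← Finset.sum_add_distrib]
      refine Finset.sum_congr rfl fun j _ => ?_
      ring
    -- step B : fundamental theorem of calculus along the segment
    have stepB : ∀ j, (∫ t in (0:ℝ)..1, (f (γ y₀ t) j
        + t * (fderiv ℝ (fun x => f x j) (γ y₀ t) (y₀ - c)))) = f y₀ j := by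
      intro j
      have hγd : ∀ t : ℝ, HasDerivAt (fun t => γ y₀ t) (y₀ - c) t := by
        intro t
        have h1 : HasDerivAt (fun t : ℝ => t • (y₀ - c)) ((1:ℝ) • (y₀ - c)) t :=
          (hasDerivAt_id t).smul_const (y₀ - c)
        rw [one_smul] at h1
        exact h1.const_add c
      have hderiv : ∀ t ∈ Set.uIcc (0:ℝ) 1, HasDerivAt (fun t => t * f (γ y₀ t) j)
          (f (γ y₀ t) j + t * (fderiv ℝ (fun x => f x j) (γ y₀ t) (y₀ - c))) t := by
        intro t ht
        rw [hIcc] at ht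
        have hfj : HasFDerivAt (fun x => f x j)
            (fderiv ℝ (fun x => f x j) (γ y₀ t)) (γ y₀ t) :=
          (hfdiffi _ (hγV t ht) j).hasFDerivAt
        have hcomp : HasDerivAt (fun t => f (γ y₀ t) j)
            (fderiv ℝ (fun x => f x j) (γ y₀ t) (y₀ - c)) t :=
          hfj.comp_hasDerivAt t (hγd t)
        have := (hasDerivAt_id t).mul hcomp
        simpa [Pi.mul_def] using this
      have hintg : IntervalIntegrable (fun t => f (γ y₀ t) j
          + t * (fderiv ℝ (fun x => f x j) (γ y₀ t) (y₀ - c)))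
          MeasureTheory.volume 0 1 := by
        apply ContinuousOn.intervalIntegrable
        rw [hIcc]
        have h1 : ContinuousOn (fun t => f (γ y₀ t) j) (Set.Icc (0:ℝ) 1) :=
          ((continuous_apply j).comp_continuousOn hcont).comp (hγcont y₀).continuousOn
            fun t ht => hball (hγV t ht)
        have h2 : ContinuousOn (fun t => fderiv ℝ (fun x => f x j) (γ y₀ t))
            (Set.Icc (0:ℝ) 1) :=
          (hcontDi j).comp (hγcont y₀).continuousOn fun t ht => hγV t ht
        have h3 : ContinuousOn (fun t => fderiv ℝ (fun x => f x j) (γ y₀ t) (y₀ - c))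
            (Set.Icc (0:ℝ) 1) :=
          (ContinuousLinearMap.apply ℝ ℝ (y₀ - c)).continuous.comp_continuousOn h2
        exact h1.add (continuousOn_id.mul h3)
      have := intervalIntegral.integral_eq_sub_of_hasDerivAt hderiv hintg
      rw [this]
      have hγ1 : γ y₀ 1 = y₀ := by
        show c + (1:ℝ) • (y₀ - c) = y₀
        rw [one_smul, add_sub_cancel]
      rw [hγ1]
      ring
    -- step C : combine
    have hintg2 : ∀ j, IntervalIntegrable (fun t => v j * (f (γ y₀ t) j
        + t * (fderiv ℝ (fun x => f x j) (γ y₀ t) (y₀ - c))))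
        MeasureTheory.volume 0 1 := by
      intro j
      apply ContinuousOn.intervalIntegrable
      rw [hIcc]
      have h1 : ContinuousOn (fun t => f (γ y₀ t) j) (Set.Icc (0:ℝ) 1) :=
        ((continuous_apply j).comp_continuousOn hcont).comp (hγcont y₀).continuousOn
          fun t ht => hball (hγV t ht)
      have h2 : ContinuousOn (fun t => fderiv ℝ (fun x => f x j) (γ y₀ t))
          (Set.Icc (0:ℝ) 1) :=
        (hcontDi j).comp (hγcont y₀).continuousOn fun t ht => hγV t ht
      have h3 : ContinuousOn (fun t => fderiv ℝ (fun x => f x j) (γ y₀ t) (y₀ - c))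
          (Set.Icc (0:ℝ) 1) :=
        (ContinuousLinearMap.apply ℝ ℝ (y₀ - c)).continuous.comp_continuousOn h2
      exact continuousOn_const.mul (h1.add (continuousOn_id.mul h3))
    calc ∫ t in (0:ℝ)..1, F' y₀ t v
        = ∫ t in (0:ℝ)..1, ∑ j, v j * (f (γ y₀ t) j
            + t * (fderiv ℝ (fun x => f x j) (γ y₀ t) (y₀ - c))) := by
          apply intervalIntegral.integral_congr
          intro t ht
          rw [hIcc] at ht
          exact stepA t ht
      _ = ∑ j, ∫ t in (0:ℝ)..1, v j * (f (γ y₀ t) j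
            + t * (fderiv ℝ (fun x => f x j) (γ y₀ t) (y₀ - c))) :=
          intervalIntegral.integral_finset_sum fun j _ => hintg2 j
      _ = ∑ j, v j * ∫ t in (0:ℝ)..1, (f (γ y₀ t) j
            + t * (fderiv ℝ (fun x => f x j) (γ y₀ t) (y₀ - c))) := by
          refine Finset.sum_congr rfl fun j _ => ?_
          exact intervalIntegral.integral_const_mul (v j) _
      _ = ∑ j, v j * f y₀ j := by
          refine Finset.sum_congr rfl fun j _ => ?_
          rw [stepB j]
      _ = (∑ i, f y₀ i • ContinuousLinearMap.proj (R := ℝ)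
            (φ := fun _ : ι => ℝ) i) v := by
          simp only [ContinuousLinearMap.sum_apply, ContinuousLinearMap.smul_apply,
            ContinuousLinearMap.proj_apply, smul_eq_mul]
          exact Finset.sum_congr rfl fun j _ => mul_comm _ _
  rw [← hint_eq]
  exact key

end poincare




/-- **Existence of extended generating functions.** Let `ℳ` be a C² symplectic map
on `ℝ²ⁿ` and `α = (α₁, α₂)ᵀ` a C¹ conformal symplectic map on `ℝ⁴ⁿ` with Jacobian
blocks `[[A, B], [C, D]]`. If `det(C(ℳ(z), z)·M(z) + D(ℳ(z), z)) ≠ 0`, then on a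
neighborhood `U` of `z` the map `g = α₂ ∘ (ℳ, Id)` is a C¹ diffeomorphism onto its
image, and there is a C¹ function `F` on `g(U)` with
`(∇F)ᵀ = (α₁ ∘ (ℳ, Id)) ∘ (α₂ ∘ (ℳ, Id))⁻¹`, i.e. `∇F(g(x)) = α₁(ℳ(x), x)` on `U`. -/
theorem existence_of_extended_generating_functions
    (n : ℕ) (hn : 1 ≤ n) (μ : ℝ) (hμ : μ ≠ 0)
    (J : Matrix (Fin n ⊕ Fin n) (Fin n ⊕ Fin n) ℝ)
    (hJ : J = Matrix.fromBlocks 0 1 (-1) 0)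
    (M : ((Fin n ⊕ Fin n) → ℝ) → (Fin n ⊕ Fin n) → ℝ)
    (hMsmooth : ContDiff ℝ 2 M)
    (hMsymp : ∀ x : (Fin n ⊕ Fin n) → ℝ,
      (Matrix.of fun i j => fderiv ℝ (fun y => M y i) x (Pi.single j 1))ᵀ * J *
        (Matrix.of fun i j => fderiv ℝ (fun y => M y i) x (Pi.single j 1)) = J)
    (α : (((Fin n ⊕ Fin n) ⊕ (Fin n ⊕ Fin n)) → ℝ) →
      ((Fin n ⊕ Fin n) ⊕ (Fin n ⊕ Fin n)) → ℝ)
    (hα : ContDiff ℝ 1 α)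
    (hαconf : ∀ w : ((Fin n ⊕ Fin n) ⊕ (Fin n ⊕ Fin n)) → ℝ,
      (Matrix.of fun i j => fderiv ℝ (fun y => α y i) w (Pi.single j 1))ᵀ *
          Matrix.fromBlocks 0 1 (-1) 0 *
        (Matrix.of fun i j => fderiv ℝ (fun y => α y i) w (Pi.single j 1)) =
      μ • Matrix.fromBlocks J 0 0 (-J))
    (z : (Fin n ⊕ Fin n) → ℝ)
    (hdet :
      (Matrix.of (fun i j => fderiv ℝ (fun y => α y (Sum.inr i)) (Sum.elim (M z) z)
            (Pi.single (Sum.inl j) 1)) *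
          Matrix.of (fun i j => fderiv ℝ (fun y => M y i) z (Pi.single j 1)) +
        Matrix.of (fun i j => fderiv ℝ (fun y => α y (Sum.inr i)) (Sum.elim (M z) z)
            (Pi.single (Sum.inr j) 1))).det ≠ 0) :
    ∃ U : Set ((Fin n ⊕ Fin n) → ℝ), IsOpen U ∧ z ∈ U ∧
      Set.InjOn (fun x i => α (Sum.elim (M x) x) (Sum.inr i)) U ∧
      IsOpen ((fun x i => α (Sum.elim (M x) x) (Sum.inr i)) '' U) ∧
      (∃ ginv : ((Fin n ⊕ Fin n) → ℝ) → (Fin n ⊕ Fin n) → ℝ,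
        ContDiffOn ℝ 1 ginv ((fun x i => α (Sum.elim (M x) x) (Sum.inr i)) '' U) ∧
        (∀ x ∈ U, ginv (fun i => α (Sum.elim (M x) x) (Sum.inr i)) = x) ∧
        ∀ y ∈ (fun x i => α (Sum.elim (M x) x) (Sum.inr i)) '' U,
          (fun i => α (Sum.elim (M (ginv y)) (ginv y)) (Sum.inr i)) = y) ∧
      ∃ F : ((Fin n ⊕ Fin n) → ℝ) → ℝ,
        ContDiffOn ℝ 1 F ((fun x i => α (Sum.elim (M x) x) (Sum.inr i)) '' U) ∧
        ∀ x ∈ U, ∀ i : Fin n ⊕ Fin n,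
          fderiv ℝ F (fun k => α (Sum.elim (M x) x) (Sum.inr k)) (Pi.single i 1) =
            α (Sum.elim (M x) x) (Sum.inl i) := by
  classical
  -- basic smoothness facts
  have hM1 : ContDiff ℝ 1 M := hMsmooth.of_le (by norm_num)
  have hαi : ∀ κ, ContDiff ℝ 1 (fun w => α w κ) := fun κ => contDiff_pi.1 hα κ
  have hαd : ∀ (κ) (w), DifferentiableAt ℝ (fun w' => α w' κ) w := fun κ w =>
    ((hαi κ).differentiable one_ne_zero) w
  have hMd : ∀ x, DifferentiableAt ℝ M x := fun x => (hM1.differentiable one_ne_zero) x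
  have hh : ContDiff ℝ 1 (fun x : (Fin n ⊕ Fin n) → ℝ =>
      (Sum.elim (M x) x : (Fin n ⊕ Fin n) ⊕ (Fin n ⊕ Fin n) → ℝ)) := by
    rw [contDiff_pi]; intro κ
    cases κ with
    | inl k => exact contDiff_pi.1 hM1 k
    | inr k => exact contDiff_pi.1 contDiff_id k
  set g := fun x (i : Fin n ⊕ Fin n) => α (Sum.elim (M x) x) (Sum.inr i) with hgdef
  have hg : ContDiff ℝ 1 g := by
    rw [hgdef, contDiff_pi]; intro i
    exact (hαi (Sum.inr i)).comp hh
  have hgd : ∀ x, DifferentiableAt ℝ g x := fun x => (hg.differentiable one_ne_zero) x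
  -- the Jacobian matrix of g
  set Q : ((Fin n ⊕ Fin n) → ℝ) → Matrix (Fin n ⊕ Fin n) (Fin n ⊕ Fin n) ℝ := fun x =>
    Matrix.of (fun i j => fderiv ℝ (fun y => α y (Sum.inr i)) (Sum.elim (M x) x)
        (Pi.single (Sum.inl j) 1)) *
      Matrix.of (fun i j => fderiv ℝ (fun y => M y i) x (Pi.single j 1)) +
    Matrix.of (fun i j => fderiv ℝ (fun y => α y (Sum.inr i)) (Sum.elim (M x) x)
        (Pi.single (Sum.inr j) 1)) with hQdef
  have hdetz : (Q z).det ≠ 0 := hdet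
  have hQg : ∀ (x) (i j : Fin n ⊕ Fin n),
      fderiv ℝ (fun x' => g x' i) x (Pi.single j 1) = Q x i j := by
    intro x i j
    show fderiv ℝ (fun x' => α (Sum.elim (M x') x') (Sum.inr i)) x (Pi.single j 1) = Q x i j
    rw [chain_entry_elim (ψ := fun y => α y (Sum.inr i)) (hαd _ _) (hMd x) j]
    rw [hQdef]
    simp only [Matrix.add_apply, Matrix.mul_apply, Matrix.of_apply]
    congr 1
    exact Finset.sum_congr rfl fun k _ => mul_comm _ _
  -- the nondegeneracy locus is open
  have hQdetcont : Continuous fun x => (Q x).det := by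
    apply Continuous.matrix_det
    rw [hQdef]
    refine Continuous.add (Continuous.matrix_mul ?_ ?_) ?_
    · apply continuous_matrix
      intro i j
      exact (((hαi (Sum.inr i)).continuous_fderiv one_ne_zero).comp hh.continuous).clm_apply
        continuous_const
    · apply continuous_matrix
      intro i j
      exact ((contDiff_pi.1 hMsmooth i).continuous_fderiv (by norm_num)).clm_apply
        continuous_const
    · apply continuous_matrix
      intro i j
      exact (((hαi (Sum.inr i)).continuous_fderiv one_ne_zero).comp hh.continuous).clm_apply
        continuous_const
  set U₀ : Set ((Fin n ⊕ Fin n) → ℝ) := {x | (Q x).det ≠ 0} with hU₀def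
  have hU₀ : IsOpen U₀ := isOpen_ne.preimage hQdetcont
  -- continuous linear equivalences from the invertible Jacobian
  have hΦ : ∀ x ∈ U₀, ∃ Φ : ((Fin n ⊕ Fin n) → ℝ) ≃L[ℝ] ((Fin n ⊕ Fin n) → ℝ),
      (Φ : ((Fin n ⊕ Fin n) → ℝ) →L[ℝ] ((Fin n ⊕ Fin n) → ℝ)) = fderiv ℝ g x := by
    intro x hx
    apply clm_equiv_of_det
    have hof : (Matrix.of fun i j => fderiv ℝ g x (Pi.single j 1) i) = Q x := by
      refine Matrix.ext fun i j => ?_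
      show fderiv ℝ g x (Pi.single j 1) i = Q x i j
      rw [← hQg x i j, fderiv_component (hgd x) i]
    rw [hof]
    exact hx
  -- the local homeomorphism given by the inverse function theorem at z
  have hz₀ : z ∈ U₀ := hdetz
  obtain ⟨Φz, hΦz⟩ := hΦ z hz₀
  have hfz : HasFDerivAt g
      (Φz : ((Fin n ⊕ Fin n) → ℝ) →L[ℝ] ((Fin n ⊕ Fin n) → ℝ)) z := by
    rw [hΦz]; exact (hgd z).hasFDerivAt
  have hgcz : ContDiffAt ℝ 1 g z := hg.contDiffAt
  set e := hgcz.toOpenPartialHomeomorph g hfz one_ne_zero with hedef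
  have hecoe : (e : ((Fin n ⊕ Fin n) → ℝ) → (Fin n ⊕ Fin n) → ℝ) = g :=
    ContDiffAt.toOpenPartialHomeomorph_coe _ _ _
  have hzsrc : z ∈ e.source := ContDiffAt.mem_toOpenPartialHomeomorph_source _ _ _
  set U₁ := e.source ∩ U₀ with hU₁def
  have hU₁open : IsOpen U₁ := e.open_source.inter hU₀
  have hzU₁ : z ∈ U₁ := ⟨hzsrc, hz₀⟩
  have hInj : Set.InjOn g U₁ := by
    have h1 := e.injOn.mono (Set.inter_subset_left : U₁ ⊆ e.source)
    rwa [hecoe] at h1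
  have himg_sub : g '' U₁ ⊆ e.target := by
    rintro y ⟨x, hx, rfl⟩
    have h1 : e x ∈ e.target := e.map_source hx.1
    rwa [hecoe] at h1
  have hlinv : ∀ x ∈ U₁, e.symm (g x) = x := by
    intro x hx
    have h1 : e.symm (e x) = x := e.left_inv hx.1
    rwa [hecoe] at h1
  have hVopen : IsOpen (g '' U₁) := by
    have h1 := e.isOpen_image_of_subset_source hU₁open
      (Set.inter_subset_left : U₁ ⊆ e.source)
    rwa [hecoe] at h1
  have hsymm_cd : ∀ y ∈ g '' U₁, ContDiffAt ℝ 1 e.symm y := by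
    rintro y ⟨x, hx, rfl⟩
    obtain ⟨Φx, hΦx⟩ := hΦ x hx.2
    have hse : e.symm (g x) = x := hlinv x hx
    apply e.contDiffAt_symm (himg_sub ⟨x, hx, rfl⟩) (f₀' := Φx)
    · rw [hse, hecoe, hΦx]
      exact (hgd x).hasFDerivAt
    · rw [hse, hecoe]
      exact hg.contDiffAt
  -- the map f = α₁ ∘ (M, Id) ∘ g⁻¹
  set f : ((Fin n ⊕ Fin n) → ℝ) → (Fin n ⊕ Fin n) → ℝ :=
    fun y k => α (Sum.elim (M (e.symm y)) (e.symm y)) (Sum.inl k) with hfdef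
  have hα₁h : ContDiff ℝ 1 (fun x (k : Fin n ⊕ Fin n) => α (Sum.elim (M x) x) (Sum.inl k)) := by
    rw [contDiff_pi]; intro k
    exact (hαi (Sum.inl k)).comp hh
  have hf_cd : ∀ y ∈ g '' U₁, ContDiffAt ℝ 1 f y := fun y hy =>
    (hα₁h.contDiffAt).comp y (hsymm_cd y hy)
  have hfOn : ContDiffOn ℝ 1 f (g '' U₁) := fun y hy => (hf_cd y hy).contDiffWithinAt
  -- symmetry of the Jacobian of f on g '' U₁
  have hsymf : ∀ y ∈ g '' U₁, ∀ i j : Fin n ⊕ Fin n,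
      fderiv ℝ (fun w => f w i) y (Pi.single j 1)
        = fderiv ℝ (fun w => f w j) y (Pi.single i 1) := by
    rintro y ⟨x, hx, rfl⟩ i j
    set w : ((Fin n ⊕ Fin n) ⊕ (Fin n ⊕ Fin n)) → ℝ := Sum.elim (M x) x with hwdef
    set A := Matrix.of (fun i j => fderiv ℝ (fun y => α y (Sum.inl i)) w
      (Pi.single (Sum.inl j) 1)) with hAdef
    set B := Matrix.of (fun i j => fderiv ℝ (fun y => α y (Sum.inl i)) w
      (Pi.single (Sum.inr j) 1)) with hBdef
    set C := Matrix.of (fun i j => fderiv ℝ (fun y => α y (Sum.inr i)) w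
      (Pi.single (Sum.inl j) 1)) with hCdef
    set D := Matrix.of (fun i j => fderiv ℝ (fun y => α y (Sum.inr i)) w
      (Pi.single (Sum.inr j) 1)) with hDdef
    set Mm := Matrix.of (fun i j => fderiv ℝ (fun y => M y i) x (Pi.single j 1)) with hMmdef
    -- the block decomposition of the Jacobian of α
    have hfromB : (Matrix.of fun i j => fderiv ℝ (fun y => α y i) w (Pi.single j 1))
        = Matrix.fromBlocks A B C D := by
      refine Matrix.ext fun i j => ?_
      cases i <;> cases j <;> rfl
    have hconf := hαconf w
    rw [hfromB, Matrix.fromBlocks_transpose, Matrix.fromBlocks_multiply,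
      Matrix.fromBlocks_multiply, Matrix.fromBlocks_smul] at hconf
    simp only [Matrix.mul_zero, Matrix.zero_mul, Matrix.mul_one, Matrix.one_mul,
      Matrix.mul_neg, Matrix.neg_mul, zero_add, add_zero, smul_zero, smul_neg] at hconf
    have h11 := congrArg Matrix.toBlocks₁₁ hconf
    have h12 := congrArg Matrix.toBlocks₁₂ hconf
    have h22 := congrArg Matrix.toBlocks₂₂ hconf
    simp only [Matrix.toBlocks_fromBlocks₁₁, Matrix.toBlocks_fromBlocks₁₂,
      Matrix.toBlocks_fromBlocks₂₂] at h11 h12 h22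
    have h1 : Aᵀ * C - Cᵀ * A = μ • J := by
      rw [sub_eq_iff_eq_add]
      rw [← h11]; abel
    have h2 : Aᵀ * D - Cᵀ * B = 0 := by
      rw [sub_eq_iff_eq_add]
      rw [← h12]; abel
    have h4 : Bᵀ * D - Dᵀ * B = -(μ • J) := by
      rw [sub_eq_iff_eq_add]
      rw [← h22]; abel
    have hMx : Mmᵀ * J * Mm = J := hMsymp x
    have sym := sym_of_blocks J A B C D Mm μ h1 h2 h4 hMx
    have hQx : Q x = C * Mm + D := rfl
    -- chain rule : P * Q x = A * Mm + B
    have hfd : DifferentiableAt ℝ f (g x) := (hf_cd (g x) ⟨x, hx, rfl⟩).differentiableAt one_ne_zero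
    set P := Matrix.of (fun i k => fderiv ℝ (fun w' => f w' i) (g x) (Pi.single k 1)) with hPdef
    have hPQ : P * Q x = A * Mm + B := by
      refine Matrix.ext fun i' j' => ?_
      have hc : fderiv ℝ (fun x' => f (g x') i') x (Pi.single j' 1)
          = ∑ k, fderiv ℝ (fun x' => g x' k) x (Pi.single j' 1)
              * fderiv ℝ (fun w' => f w' i') (g x) (Pi.single k 1) :=
        chain_entry (ψ := fun w' => f w' i') (φ := g)
          (differentiableAt_component hfd i') (hgd x) _
      have hev : fderiv ℝ (fun x' => f (g x') i') x
          = fderiv ℝ (fun x' => α (Sum.elim (M x') x') (Sum.inl i')) x := by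
        apply Filter.EventuallyEq.fderiv_eq
        filter_upwards [hU₁open.mem_nhds hx] with x' hx'
        show α (Sum.elim (M (e.symm (g x'))) (e.symm (g x'))) (Sum.inl i')
          = α (Sum.elim (M x') x') (Sum.inl i')
        rw [hlinv x' hx']
      have hN : fderiv ℝ (fun x' => α (Sum.elim (M x') x') (Sum.inl i')) x (Pi.single j' 1)
          = (A * Mm + B) i' j' := by
        rw [chain_entry_elim (ψ := fun y => α y (Sum.inl i')) (hαd _ _) (hMd x) j']
        show _ = (A * Mm) i' j' + B i' j'
        rw [Matrix.mul_apply]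
        congr 1
        exact Finset.sum_congr rfl fun k _ => mul_comm _ _
      show ∑ k, P i' k * Q x k j' = (A * Mm + B) i' j'
      rw [← hN, ← hev, hc]
      refine Finset.sum_congr rfl fun k _ => ?_
      rw [mul_comm, ← hQg x k j']
      rfl
    -- symmetry of P
    have hsymmP : Pᵀ = P := by
      have hQdetx : (Q x).det ≠ 0 := hx.2
      have hQTdet : ((Q x)ᵀ).det ≠ 0 := by rwa [Matrix.det_transpose]
      have h6 := sym
      rw [← hQx, ← hPQ] at h6
      have h7 : ((Q x)ᵀ * (P * Q x))ᵀ = (Q x)ᵀ * (Pᵀ * Q x) := by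
        rw [Matrix.transpose_mul, Matrix.transpose_mul, Matrix.transpose_transpose,
          Matrix.mul_assoc]
      have h5 : (Q x)ᵀ * (Pᵀ * Q x) = (Q x)ᵀ * (P * Q x) := by rw [← h7, h6]
      have h8 := congrArg (fun Z => ((Q x)ᵀ)⁻¹ * Z) h5
      simp only [← Matrix.mul_assoc] at h8
      rw [Matrix.nonsing_inv_mul _ (isUnit_iff_ne_zero.2 hQTdet), Matrix.one_mul, Matrix.one_mul] at h8
      have h9 := congrArg (fun Z => Z * (Q x)⁻¹) h8
      simp only [Matrix.mul_assoc] at h9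
      rw [Matrix.mul_nonsing_inv _ (isUnit_iff_ne_zero.2 hQdetx), Matrix.mul_one, Matrix.mul_one] at h9
      exact h9
    show P i j = P j i
    conv_lhs => rw [← hsymmP]
    rfl
  -- a ball around g z inside the image
  obtain ⟨r, hr0, hball⟩ := Metric.isOpen_iff.1 hVopen (g z) ⟨z, hzU₁, rfl⟩
  obtain ⟨F, hF⟩ := poincare hVopen hfOn hsymf hball
  -- the final neighbourhood
  refine ⟨U₁ ∩ g ⁻¹' (Metric.ball (g z) r), ?_, ?_, ?_, ?_, ?_, ?_⟩
  · exact hU₁open.inter (Metric.isOpen_ball.preimage hg.continuous)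
  · exact ⟨hzU₁, Metric.mem_ball_self hr0⟩
  · exact hInj.mono Set.inter_subset_left
  · have himg : g '' (U₁ ∩ g ⁻¹' (Metric.ball (g z) r))
        = (g '' U₁) ∩ Metric.ball (g z) r := by
      apply Set.Subset.antisymm
      · rintro y ⟨x, ⟨hx1, hx2⟩, rfl⟩
        exact ⟨⟨x, hx1, rfl⟩, hx2⟩
      · rintro y ⟨⟨x, hx1, rfl⟩, hy2⟩
        exact ⟨x, ⟨hx1, hy2⟩, rfl⟩
    rw [himg]
    exact hVopen.inter Metric.isOpen_ball
  · have himg : g '' (U₁ ∩ g ⁻¹' (Metric.ball (g z) r))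
        = (g '' U₁) ∩ Metric.ball (g z) r := by
      apply Set.Subset.antisymm
      · rintro y ⟨x, ⟨hx1, hx2⟩, rfl⟩
        exact ⟨⟨x, hx1, rfl⟩, hx2⟩
      · rintro y ⟨⟨x, hx1, rfl⟩, hy2⟩
        exact ⟨x, ⟨hx1, hy2⟩, rfl⟩
    refine ⟨e.symm, ?_, ?_, ?_⟩
    · intro y hy
      rw [himg] at hy
      exact (hsymm_cd y hy.1).contDiffWithinAt
    · intro x hx
      exact hlinv x hx.1
    · intro y hy
      rw [himg] at hy
      obtain ⟨⟨x, hx1, rfl⟩, _⟩ := hy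
      show g (e.symm (g x)) = g x
      rw [hlinv x hx1]
  · have himg : g '' (U₁ ∩ g ⁻¹' (Metric.ball (g z) r))
        = (g '' U₁) ∩ Metric.ball (g z) r := by
      apply Set.Subset.antisymm
      · rintro y ⟨x, ⟨hx1, hx2⟩, rfl⟩
        exact ⟨⟨x, hx1, rfl⟩, hx2⟩
      · rintro y ⟨⟨x, hx1, rfl⟩, hy2⟩
        exact ⟨x, ⟨hx1, hy2⟩, rfl⟩
    have hopenU' : IsOpen (g '' (U₁ ∩ g ⁻¹' (Metric.ball (g z) r))) := by
      rw [himg]; exact hVopen.inter Metric.isOpen_ball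
    have himgsub : g '' (U₁ ∩ g ⁻¹' (Metric.ball (g z) r)) ⊆ Metric.ball (g z) r := by
      rw [himg]; exact Set.inter_subset_right
    refine ⟨F, ?_, ?_⟩
    · have h01 : (1 : WithTop ℕ∞) = 0 + 1 := (zero_add 1).symm
      rw [h01, contDiffOn_succ_iff_fderiv_of_isOpen hopenU']
      refine ⟨fun y hy => (hF y (himgsub hy)).differentiableAt.differentiableWithinAt,
        by simp, ?_⟩
      rw [contDiffOn_zero]
      have hLcont : ContinuousOn (fun y => ∑ i, f y i •
          ContinuousLinearMap.proj (R := ℝ) (φ := fun _ : Fin n ⊕ Fin n => ℝ) i)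
          (g '' (U₁ ∩ g ⁻¹' (Metric.ball (g z) r))) := by
        apply continuousOn_finset_sum
        intro i _
        refine ContinuousOn.fun_smul ?_ continuousOn_const
        exact (continuous_apply i).comp_continuousOn
          (hfOn.continuousOn.mono (by rw [himg]; exact Set.inter_subset_left))
      exact ContinuousOn.congr hLcont fun y hy => (hF y (himgsub hy)).fderiv
    · intro x hx i
      show fderiv ℝ F (g x) (Pi.single i 1) = α (Sum.elim (M x) x) (Sum.inl i)
      rw [(hF (g x) hx.2).fderiv]
      have h1 : (∑ k, f (g x) k • ContinuousLinearMap.proj (R := ℝ)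
          (φ := fun _ : Fin n ⊕ Fin n => ℝ) k) (Pi.single i 1) = f (g x) i := by
        simp only [ContinuousLinearMap.sum_apply, ContinuousLinearMap.smul_apply,
          ContinuousLinearMap.proj_apply, smul_eq_mul, Pi.single_apply]
        rw [Finset.sum_eq_single i]
        · simp
        · intro k _ hk
          simp [hk]
        · intro hcon; exact absurd (Finset.mem_univ i) hcon
      rw [h1]
      show α (Sum.elim (M (e.symm (g x))) (e.symm (g x))) (Sum.inl i) = _
      rw [hlinv x hx.1]
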